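/- Each of the following birational transformations maps solutions of the G2^(1) system to solutions: with the notation (*) = (x,y,z,w,t; α0,α1,α2), s0: (*) ↦ (x, y, z, w−α0/z, t; −α0, α1+α0, α2); s1: (*) ↦ (x, y−α1/(x−tw), z−α1·t/(x−tw), w, t; α0+α1, −α1, α2+α1); s2: (*) ↦ (x−3α2y²/(z−y³), y, z, w−α2/(z−y³), t; α0, α1+3α2, −α2). Precisely: if (x(t),y(t),z(t),w(t)) is a differentiable solution of the G2^(1) system with parameters (α0,α1,α2) on an open set where t ≠ 0 and the relevant denominators (z, x−tw, z−y³ respectively) do not vanish, then each transformed tuple solves the G2^(1) system with the transformed parameters. These transformations generate the affine Weyl group of type G2^(1). -/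

import Mathlib

/- STATEMENT 17: the Bäcklund transformations s0, s1, s2 map solutions of the
G2^(1) system to solutions (with transformed parameters).  The final clause
"these transformations generate the affine Weyl group of type G2^(1)" is a side
remark and not part of the formalized claim. -/

open Complex

noncomputable def HG2 (a0 a1 a2 : ℂ) (t x y z w : ℂ) : ℂ :=
  -(3*(5*a0 + 18*a1 + 27*a2)*t*x*y^3) - x*y/(2*t)
    + 6*a1*(a0 + 6*a1 + 9*a2)*t*y^2
    - 12*t^2*z^2*w^2 - (24*(a1+a2)*t^2 - 3/(2*t))*z*w
    + 12*t^2*y^3*z*w^2 - 24*t*x*y^3*z*w + 12*x^2*y^3*z + 24*t*x*z^2*w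
    - 12*x^2*z^2 - 12*a0*t^2*y^3*w
    + 12*(2*a0 + 4*a1 + 9*a2)*x*y^2*z + 3*(19*a0 + 38*a1 + 45*a2)*t*y^2*z*w
    - 6*a1*(a0 + 4*a1 + 9*a2)*y*z - 4*(a0 - 4*a1 - 3*a2)*t*x*z

noncomputable def pdX (H : ℂ → ℂ → ℂ → ℂ → ℂ → ℂ) (t x y z w : ℂ) : ℂ :=
  deriv (fun s => H t s y z w) x

noncomputable def pdY (H : ℂ → ℂ → ℂ → ℂ → ℂ → ℂ) (t x y z w : ℂ) : ℂ :=
  deriv (fun s => H t x s z w) y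

noncomputable def pdZ (H : ℂ → ℂ → ℂ → ℂ → ℂ → ℂ) (t x y z w : ℂ) : ℂ :=
  deriv (fun s => H t x y s w) z

noncomputable def pdW (H : ℂ → ℂ → ℂ → ℂ → ℂ → ℂ) (t x y z w : ℂ) : ℂ :=
  deriv (fun s => H t x y z s) w

def IsSol (H : ℂ → ℂ → ℂ → ℂ → ℂ → ℂ) (U : Set ℂ) (x y z w : ℂ → ℂ) : Prop :=
  ∀ t ∈ U,
    HasDerivAt x (pdY H t (x t) (y t) (z t) (w t)) t ∧
    HasDerivAt y (-(pdX H t (x t) (y t) (z t) (w t))) t ∧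
    HasDerivAt z (pdW H t (x t) (y t) (z t) (w t)) t ∧
    HasDerivAt w (-(pdZ H t (x t) (y t) (z t) (w t))) t

lemma deriv_eq_of_eq_poly (f : ℂ → ℂ) (c3 c2 c1 c0 x : ℂ)
    (hf : ∀ s, f s = c3*s^3 + c2*s^2 + (c1*s + c0)) :
    deriv f x = 3*c3*x^2 + 2*c2*x + c1 := by
  have hfe : f = fun s => c3*s^3 + c2*s^2 + (c1*s + c0) := funext hf
  have H : HasDerivAt (fun s : ℂ => c3*s^3 + c2*s^2 + (c1*s + c0))
      (3*c3*x^2 + 2*c2*x + c1) x := by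
    have h3 := (hasDerivAt_pow 3 x).const_mul c3
    have h2 := (hasDerivAt_pow 2 x).const_mul c2
    have h1 := (hasDerivAt_id x).const_mul c1
    have h0 := hasDerivAt_const x c0
    have := (h3.add h2).add (h1.add h0)
    refine this.congr_deriv (Eq.symm ?_)
    norm_num; ring
  rw [hfe]; exact H.deriv

lemma pdX_eq (a0 a1 a2 t x y z w : ℂ) :
    pdX (HG2 a0 a1 a2) t x y z w =
      -(3*(5*a0+18*a1+27*a2)*t*y^3) - y/(2*t) + 24*x*y^3*z - 24*t*y^3*z*w
        + 24*t*z^2*w - 24*x*z^2 + 12*(2*a0+4*a1+9*a2)*y^2*z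
        - 4*(a0-4*a1-3*a2)*t*z := by
  simp only [pdX]
  rw [deriv_eq_of_eq_poly _ 0 (12*y^3*z - 12*z^2)
      (-(3*(5*a0+18*a1+27*a2)*t*y^3) - y/(2*t) - 24*t*y^3*z*w + 24*t*z^2*w
        + 12*(2*a0+4*a1+9*a2)*y^2*z - 4*(a0-4*a1-3*a2)*t*z)
      (HG2 a0 a1 a2 t 0 y z w) x (fun s => by simp only [HG2]; ring)]
  ring

lemma pdY_eq (a0 a1 a2 t x y z w : ℂ) :
    pdY (HG2 a0 a1 a2) t x y z w =
      -(9*(5*a0+18*a1+27*a2)*t*x*y^2) - x/(2*t) + 12*a1*(a0+6*a1+9*a2)*t*y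
        + 36*t^2*y^2*z*w^2 - 72*t*x*y^2*z*w + 36*x^2*y^2*z - 36*a0*t^2*y^2*w
        + 24*(2*a0+4*a1+9*a2)*x*y*z + 6*(19*a0+38*a1+45*a2)*t*y*z*w
        - 6*a1*(a0+4*a1+9*a2)*z := by
  simp only [pdY]
  rw [deriv_eq_of_eq_poly _
      (-(3*(5*a0+18*a1+27*a2)*t*x) + 12*t^2*z*w^2 - 24*t*x*z*w + 12*x^2*z
        - 12*a0*t^2*w)
      (6*a1*(a0+6*a1+9*a2)*t + 12*(2*a0+4*a1+9*a2)*x*z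
        + 3*(19*a0+38*a1+45*a2)*t*z*w)
      (-(x/(2*t)) - 6*a1*(a0+4*a1+9*a2)*z)
      (HG2 a0 a1 a2 t x 0 z w) y (fun s => by simp only [HG2]; ring)]
  ring

lemma pdZ_eq (a0 a1 a2 t x y z w : ℂ) :
    pdZ (HG2 a0 a1 a2) t x y z w =
      -24*t^2*z*w^2 - (24*(a1+a2)*t^2 - 3/(2*t))*w + 12*t^2*y^3*w^2
        - 24*t*x*y^3*w + 12*x^2*y^3 + 48*t*x*z*w - 24*x^2*z
        + 12*(2*a0+4*a1+9*a2)*x*y^2 + 3*(19*a0+38*a1+45*a2)*t*y^2*w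
        - 6*a1*(a0+4*a1+9*a2)*y - 4*(a0-4*a1-3*a2)*t*x := by
  simp only [pdZ]
  rw [deriv_eq_of_eq_poly _ 0 (-(12*t^2*w^2) + 24*t*x*w - 12*x^2)
      (-((24*(a1+a2)*t^2 - 3/(2*t))*w) + 12*t^2*y^3*w^2 - 24*t*x*y^3*w
        + 12*x^2*y^3 + 12*(2*a0+4*a1+9*a2)*x*y^2
        + 3*(19*a0+38*a1+45*a2)*t*y^2*w - 6*a1*(a0+4*a1+9*a2)*y
        - 4*(a0-4*a1-3*a2)*t*x)
      (HG2 a0 a1 a2 t x y 0 w) z (fun s => by simp only [HG2]; ring)]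
  ring

lemma pdW_eq (a0 a1 a2 t x y z w : ℂ) :
    pdW (HG2 a0 a1 a2) t x y z w =
      -24*t^2*z^2*w - (24*(a1+a2)*t^2 - 3/(2*t))*z + 24*t^2*y^3*z*w
        - 24*t*x*y^3*z + 24*t*x*z^2 - 12*a0*t^2*y^3
        + 3*(19*a0+38*a1+45*a2)*t*y^2*z := by
  simp only [pdW]
  rw [deriv_eq_of_eq_poly _ 0 (-(12*t^2*z^2) + 12*t^2*y^3*z)
      (-((24*(a1+a2)*t^2 - 3/(2*t))*z) - 24*t*x*y^3*z + 24*t*x*z^2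
        - 12*a0*t^2*y^3 + 3*(19*a0+38*a1+45*a2)*t*y^2*z)
      (HG2 a0 a1 a2 t x y z 0) w (fun s => by simp only [HG2]; ring)]
  ring


set_option maxHeartbeats 4000000 in
theorem backlund_G2 (a0 a1 a2 : ℂ)
    (hrel : a0 + 2*a1 + 3*a2 = 0)
    (U : Set ℂ) (hU : IsOpen U) (hU0 : ∀ t ∈ U, t ≠ 0)
    (x y z w : ℂ → ℂ)
    (hsol : IsSol (HG2 a0 a1 a2) U x y z w) :
    -- s0
    ((∀ t ∈ U, z t ≠ 0) →
      IsSol (HG2 (-a0) (a1+a0) a2) U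
        x y z (fun t => w t - a0/(z t))) ∧
    -- s1
    ((∀ t ∈ U, x t - t * w t ≠ 0) →
      IsSol (HG2 (a0+a1) (-a1) (a2+a1)) U
        x (fun t => y t - a1/(x t - t * w t))
        (fun t => z t - a1*t/(x t - t * w t)) w) ∧
    -- s2
    ((∀ t ∈ U, z t - (y t)^3 ≠ 0) →
      IsSol (HG2 a0 (a1+3*a2) (-a2)) U
        (fun t => x t - 3*a2*(y t)^2/(z t - (y t)^3)) y
        z (fun t => w t - a2/(z t - (y t)^3))) := by
  have ha0 : a0 = -(2*a1) - 3*a2 := by linear_combination hrel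
  subst ha0
  refine ⟨?_, ?_, ?_⟩
  · -- s0
    intro hden t ht
    obtain ⟨hx, hy, hz, hw⟩ := hsol t ht
    have ht0 := hU0 t ht
    have hz0 := hden t ht
    simp only [pdX_eq, pdY_eq, pdZ_eq, pdW_eq] at hx hy hz hw ⊢
    refine ⟨?_, ?_, ?_, ?_⟩
    · convert hx using 1
      linear_combination ((-216 : ℂ)*a2*t*x t*y t^2 + (216 : ℂ)*a2*t^2*y t^2*w t + (-216 : ℂ)*a2^2*t*y t + (324 : ℂ)*a2^2*t^2*y t^2*(z t)⁻¹ + (-144 : ℂ)*a1*t*x t*y t^2 + (144 : ℂ)*a1*t^2*y t^2*w t + (-144 : ℂ)*a1*a2*t*y t + (432 : ℂ)*a1*a2*t^2*y t^2*(z t)⁻¹ + (144 : ℂ)*a1^2*t^2*y t^2*(z t)⁻¹) * (mul_inv_cancel₀ hz0)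
    · convert hy using 1
      linear_combination ((-72 : ℂ)*a2*t*z t + (72 : ℂ)*a2*t*y t^3 + (-48 : ℂ)*a1*t*z t + (48 : ℂ)*a1*t*y t^3) * (mul_inv_cancel₀ hz0)
    · convert hz using 1
      linear_combination ((-72 : ℂ)*a2*t^2*z t + (72 : ℂ)*a2*t^2*y t^3 + (-48 : ℂ)*a1*t^2*z t + (48 : ℂ)*a1*t^2*y t^3) * (mul_inv_cancel₀ hz0)
    · have h := hw.sub ((hasDerivAt_const t (-(2*a1) - 3*a2)).div hz hz0)
      refine h.congr_deriv (Eq.symm ?_)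
      linear_combination ((9/2 : ℂ)*a2*t⁻¹*(z t)⁻¹ + (-72 : ℂ)*a2*t*x t + (72 : ℂ)*a2*t*x t*z t*(z t)⁻¹ + (-72 : ℂ)*a2*t*x t*y t^3*(z t)⁻¹ + (72 : ℂ)*a2*t^2*w t + (-72 : ℂ)*a2*t^2*z t*(z t)⁻¹*w t + (72 : ℂ)*a2*t^2*y t^3*(z t)⁻¹*w t + (-108 : ℂ)*a2^2*t*y t^2*(z t)⁻¹ + (144 : ℂ)*a2^2*t^2*(z t)⁻¹ + (3 : ℂ)*a1*t⁻¹*(z t)⁻¹ + (-48 : ℂ)*a1*t*x t + (48 : ℂ)*a1*t*x t*z t*(z t)⁻¹ + (-48 : ℂ)*a1*t*x t*y t^3*(z t)⁻¹ + (48 : ℂ)*a1*t^2*w t + (-48 : ℂ)*a1*t^2*z t*(z t)⁻¹*w t + (48 : ℂ)*a1*t^2*y t^3*(z t)⁻¹*w t + (-72 : ℂ)*a1*a2*t*y t^2*(z t)⁻¹ + (168 : ℂ)*a1*a2*t^2*(z t)⁻¹ + (48 : ℂ)*a1^2*t^2*(z t)⁻¹) * (mul_inv_cancel₀ hz0)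
  · -- s1
    intro hden t ht
    obtain ⟨hx, hy, hz, hw⟩ := hsol t ht
    have ht0 := hU0 t ht
    have hd0 := hden t ht
    simp only [pdX_eq, pdY_eq, pdZ_eq, pdW_eq] at hx hy hz hw ⊢
    have hD : HasDerivAt (fun s => x s - s * w s) _ t :=
      hx.sub ((hasDerivAt_id' t).mul hw)
    refine ⟨?_, ?_, ?_, ?_⟩
    · convert hx using 1
      linear_combination ((-72 : ℂ)*a1*(x t - t * w t)*y t*z t + (-36 : ℂ)*a1*t*(x t - t * w t)*y t^2 + (-72 : ℂ)*a1*a2*z t + (144 : ℂ)*a1*a2*t*y t + (-36 : ℂ)*a1^2*z t + (36 : ℂ)*a1^2*(x t - t * w t)*(x t - t * w t)⁻¹*z t + (72 : ℂ)*a1^2*t*y t + (72 : ℂ)*a1^2*t*(x t - t * w t)*(x t - t * w t)⁻¹*y t + (-36 : ℂ)*a1^2*a2*t*(x t - t * w t)⁻¹ + (-36 : ℂ)*a1^3*t*(x t - t * w t)*(x t - t * w t)⁻¹^2) * (mul_inv_cancel₀ hd0)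
    · have h := hy.sub ((hasDerivAt_const t a1).div hD hd0)
      refine h.congr_deriv (Eq.symm ?_)
      beta_reduce
      set dd : ℂ := x t - t * w t with hdd
      clear_value dd
      linear_combination (-a1*dd⁻¹^2*w t) * (mul_inv_cancel₀ ht0) +
          ((36 : ℂ)*a1*y t^2*z t + (-36 : ℂ)*a1*dd*dd⁻¹*y t^2*z t + (1/2 : ℂ)*a1*t⁻¹*dd⁻¹ + (-24 : ℂ)*a1*t*z t + (12 : ℂ)*a1*t*y t^3 + (24 : ℂ)*a1*t*dd*dd⁻¹*z t + (-12 : ℂ)*a1*t*dd*dd⁻¹*y t^3 + (-72 : ℂ)*a1*a2*dd⁻¹*y t*z t + (72 : ℂ)*a1*a2*t*dd⁻¹*y t^2 + (-24 : ℂ)*a1*a2*t^2*dd⁻¹ + (-72 : ℂ)*a1^2*dd⁻¹*y t*z t + (24 : ℂ)*a1^3*dd⁻¹^2*z t + (72 : ℂ)*a1^3*t*dd⁻¹^2*y t + (-24 : ℂ)*a1^4*t*dd⁻¹^3) * (mul_inv_cancel₀ hd0) +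
          ((-72 : ℂ)*a1*dd⁻¹*y t^2*z t + (36 : ℂ)*a1*dd*dd⁻¹^2*y t^2*z t + (36 : ℂ)*a1*x t*dd⁻¹^2*y t^2*z t + (-1/2 : ℂ)*a1*t⁻¹*dd⁻¹^2 + (48 : ℂ)*a1*t*dd⁻¹*z t + (-24 : ℂ)*a1*t*dd⁻¹*y t^3 + (-36 : ℂ)*a1*t*dd⁻¹^2*y t^2*z t*w t + (-24 : ℂ)*a1*t*dd*dd⁻¹^2*z t + (12 : ℂ)*a1*t*dd*dd⁻¹^2*y t^3 + (-24 : ℂ)*a1*t*x t*dd⁻¹^2*z t + (12 : ℂ)*a1*t*x t*dd⁻¹^2*y t^3 + (24 : ℂ)*a1*t^2*dd⁻¹^2*z t*w t + (-12 : ℂ)*a1*t^2*dd⁻¹^2*y t^3*w t + (72 : ℂ)*a1*a2*dd⁻¹^2*y t*z t + (-72 : ℂ)*a1*a2*t*dd⁻¹^2*y t^2 + (24 : ℂ)*a1*a2*t^2*dd⁻¹^2 + (72 : ℂ)*a1^2*dd⁻¹^2*y t*z t + (-24 : ℂ)*a1^3*dd⁻¹^3*z t + (-72 : ℂ)*a1^3*t*dd⁻¹^3*y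 t + (24 : ℂ)*a1^4*t*dd⁻¹^4) * hdd
    · have h := hz.sub (((hasDerivAt_id' t).const_mul a1).div hD hd0)
      refine h.congr_deriv (Eq.symm ?_)
      beta_reduce
      set dd : ℂ := x t - t * w t with hdd
      clear_value dd
      linear_combination (-a1*dd⁻¹ - a1*t*dd⁻¹^2*w t) * (mul_inv_cancel₀ ht0) +
          (a1*dd⁻¹ + (36 : ℂ)*a1*t*y t^2*z t + (-36 : ℂ)*a1*t*dd*dd⁻¹*y t^2*z t + (1/2 : ℂ)*a1*t*t⁻¹*dd⁻¹ + (-24 : ℂ)*a1*t^2*z t + (12 : ℂ)*a1*t^2*y t^3 + (24 : ℂ)*a1*t^2*dd*dd⁻¹*z t + (-12 : ℂ)*a1*t^2*dd*dd⁻¹*y t^3 + (-72 : ℂ)*a1*a2*t*dd⁻¹*y t*z t + (72 : ℂ)*a1*a2*t^2*dd⁻¹*y t^2 + (-24 : ℂ)*a1*a2*t^3*dd⁻¹ + (-72 : ℂ)*a1^2*t*dd⁻¹*y t*z t + (24 : ℂ)*a1^3*t*dd⁻¹^2*z t + (72 : ℂ)*a1^3*t^2*dd⁻¹^2*y t + (-24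 : ℂ)*a1^4*t^2*dd⁻¹^3) * (mul_inv_cancel₀ hd0) +
          ((-72 : ℂ)*a1*t*dd⁻¹*y t^2*z t + (36 : ℂ)*a1*t*dd*dd⁻¹^2*y t^2*z t + (36 : ℂ)*a1*t*x t*dd⁻¹^2*y t^2*z t + (-1/2 : ℂ)*a1*t*t⁻¹*dd⁻¹^2 + (48 : ℂ)*a1*t^2*dd⁻¹*z t + (-24 : ℂ)*a1*t^2*dd⁻¹*y t^3 + (-36 : ℂ)*a1*t^2*dd⁻¹^2*y t^2*z t*w t + (-24 : ℂ)*a1*t^2*dd*dd⁻¹^2*z t + (12 : ℂ)*a1*t^2*dd*dd⁻¹^2*y t^3 + (-24 : ℂ)*a1*t^2*x t*dd⁻¹^2*z t + (12 : ℂ)*a1*t^2*x t*dd⁻¹^2*y t^3 + (24 : ℂ)*a1*t^3*dd⁻¹^2*z t*w t + (-12 : ℂ)*a1*t^3*dd⁻¹^2*y t^3*w t + (72 : ℂ)*a1*a2*t*dd⁻¹^2*y t*z t + (-72 : ℂ)*a1*a2*t^2*dd⁻¹^2*y t^2 + (24 : ℂ)*a1*a2*t^3*dd⁻¹^2 + (72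 : ℂ)*a1^2*t*dd⁻¹^2*y t*z t + (-24 : ℂ)*a1^3*t*dd⁻¹^3*z t + (-72 : ℂ)*a1^3*t^2*dd⁻¹^3*y t + (24 : ℂ)*a1^4*t^2*dd⁻¹^4) * hdd
    · convert hw using 1
      linear_combination ((36 : ℂ)*a1*(x t - t * w t)*y t^2 + (-24 : ℂ)*a1*t*(x t - t * w t) + (72 : ℂ)*a1*a2*y t + (36 : ℂ)*a1^2*y t + (-36 : ℂ)*a1^2*(x t - t * w t)*(x t - t * w t)⁻¹*y t + (-36 : ℂ)*a1^2*a2*(x t - t * w t)⁻¹ + (-24 : ℂ)*a1^3*(x t - t * w t)⁻¹ + (12 : ℂ)*a1^3*(x t - t * w t)*(x t - t * w t)⁻¹^2) * (mul_inv_cancel₀ hd0)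
  · -- s2
    intro hden t ht
    obtain ⟨hx, hy, hz, hw⟩ := hsol t ht
    have ht0 := hU0 t ht
    have he0 := hden t ht
    simp only [pdX_eq, pdY_eq, pdZ_eq, pdW_eq] at hx hy hz hw ⊢
    have hE : HasDerivAt (fun s => z s - y s ^ 3) _ t := hz.sub (hy.pow 3)
    refine ⟨?_, ?_, ?_, ?_⟩
    · have h := hx.sub (((hy.pow 2).const_mul (3*a2)).div hE he0)
      refine h.congr_deriv (Eq.symm ?_)
      beta_reduce
      simp only [Pi.pow_apply]
      set ee : ℂ := z t - y t ^ 3 with hee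
      clear_value ee
      linear_combination ((144 : ℂ)*a2*x t*y t*ee + (144 : ℂ)*a2*x t*y t*ee^2*ee⁻¹ + (144 : ℂ)*a2*x t*y t^4 + (360 : ℂ)*a2*x t*y t^4*ee*ee⁻¹ + (216 : ℂ)*a2*x t*y t^7*ee⁻¹ + (-3/2 : ℂ)*a2*t⁻¹*y t^2*ee⁻¹ + (-144 : ℂ)*a2*t*y t*ee*w t + (-144 : ℂ)*a2*t*y t*ee^2*ee⁻¹*w t + (-144 : ℂ)*a2*t*y t^4*w t + (-360 : ℂ)*a2*t*y t^4*ee*ee⁻¹*w t + (-216 : ℂ)*a2*t*y t^7*ee⁻¹*w t + (-72 : ℂ)*a2*t*x t*y t^2*ee*ee⁻¹ + (-72 : ℂ)*a2*t*x t*y t^5*ee⁻¹ + (72 : ℂ)*a2*t^2*y t^2*ee*ee⁻¹*w t + (72 : ℂ)*a2*t^2*y t^5*ee⁻¹*w t + (-216 : ℂ)*a2^2*y t^3*ee*ee⁻¹ + (-216 : ℂ)*a2^2*y t^6*ee⁻¹ + (-216 : ℂ)*a2^2*t*y t + (-144 : ℂ)*a2^2*t*y t*ee*ee⁻¹ + (-252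 : ℂ)*a2^2*t*y t^4*ee⁻¹ + (108 : ℂ)*a2^2*t^2*y t^2*ee⁻¹ + (-144 : ℂ)*a1*a2*t*y t + (-144 : ℂ)*a1*a2*t*y t*ee*ee⁻¹ + (-216 : ℂ)*a1*a2*t*y t^4*ee⁻¹ + (72 : ℂ)*a1*a2*t^2*y t^2*ee⁻¹) * (mul_inv_cancel₀ he0) +
          ((144 : ℂ)*a2*x t*y t + (-144 : ℂ)*a2*x t*y t*ee^2*ee⁻¹^2 + (-144 : ℂ)*a2*x t*y t*z t*ee*ee⁻¹^2 + (216 : ℂ)*a2*x t*y t^4*ee⁻¹ + (-216 : ℂ)*a2*x t*y t^4*ee*ee⁻¹^2 + (-216 : ℂ)*a2*x t*y t^4*z t*ee⁻¹^2 + (9/2 : ℂ)*a2*t⁻¹*y t^2*ee⁻¹^2 + (-144 : ℂ)*a2*t*y t*w t + (144 : ℂ)*a2*t*y t*ee^2*ee⁻¹^2*w t + (144 : ℂ)*a2*t*y t*z t*ee*ee⁻¹^2*w t + (-216 : ℂ)*a2*t*y t^4*ee⁻¹*w t + (216 : ℂ)*a2*t*y t^4*ee*ee⁻¹^2*w t +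 (216 : ℂ)*a2*t*y t^4*z t*ee⁻¹^2*w t + (-72 : ℂ)*a2*t*x t*y t^2*ee⁻¹ + (72 : ℂ)*a2*t*x t*y t^2*ee*ee⁻¹^2 + (72 : ℂ)*a2*t*x t*y t^2*z t*ee⁻¹^2 + (72 : ℂ)*a2*t^2*y t^2*ee⁻¹*w t + (-72 : ℂ)*a2*t^2*y t^2*ee*ee⁻¹^2*w t + (-72 : ℂ)*a2*t^2*y t^2*z t*ee⁻¹^2*w t + (-216 : ℂ)*a2^2*y t^3*ee⁻¹ + (216 : ℂ)*a2^2*y t^3*ee*ee⁻¹^2 + (72 : ℂ)*a2^2*t*y t*ee⁻¹ + (144 : ℂ)*a2^2*t*y t*ee*ee⁻¹^2 + (324 : ℂ)*a2^2*t*y t^4*ee⁻¹^2 + (-108 : ℂ)*a2^2*t^2*y t^2*ee⁻¹^2 + (144 : ℂ)*a1*a2*t*y t*ee*ee⁻¹^2 + (216 : ℂ)*a1*a2*t*y t^4*ee⁻¹^2 + (-72 : ℂ)*a1*a2*t^2*y t^2*ee⁻¹^2) * hee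
    · convert hy using 1
      linear_combination ((-72 : ℂ)*a2*y t^2*(z t - y t ^ 3) + (-72 : ℂ)*a2*y t^5 + (24 : ℂ)*a2*t*(z t - y t ^ 3) + (24 : ℂ)*a2*t*y t^3) * (mul_inv_cancel₀ he0)
    · convert hz using 1
      linear_combination ((-72 : ℂ)*a2*t*y t^2*(z t - y t ^ 3) + (-72 : ℂ)*a2*t*y t^5 + (24 : ℂ)*a2*t^2*(z t - y t ^ 3) + (24 : ℂ)*a2*t^2*y t^3) * (mul_inv_cancel₀ he0)
    · have h := hw.sub ((hasDerivAt_const t a2).div hE he0)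
      refine h.congr_deriv (Eq.symm ?_)
      beta_reduce
      set ee : ℂ := z t - y t ^ 3 with hee
      clear_value ee
      linear_combination ((-72 : ℂ)*a2*x t*y t^2 + (72 : ℂ)*a2*x t*y t^2*ee*ee⁻¹ + (72 : ℂ)*a2*x t*y t^5*ee⁻¹ + (-3/2 : ℂ)*a2*t⁻¹*ee⁻¹ + (72 : ℂ)*a2*t*y t^2*w t + (-72 : ℂ)*a2*t*y t^2*ee*ee⁻¹*w t + (-72 : ℂ)*a2*t*y t^5*ee⁻¹*w t + (24 : ℂ)*a2*t*x t + (-24 : ℂ)*a2*t*x t*ee*ee⁻¹ + (-24 : ℂ)*a2*t*x t*y t^3*ee⁻¹ + (-24 : ℂ)*a2*t^2*w t + (24 : ℂ)*a2*t^2*ee*ee⁻¹*w t + (24 : ℂ)*a2*t^2*y t^3*ee⁻¹*w t + (108 : ℂ)*a2^2*y t^4*ee⁻¹ + (-180 : ℂ)*a2^2*t*y t^2*ee⁻¹ + (48 : ℂ)*a2^2*t^2*ee⁻¹ + (-72 : ℂ)*a1*a2*t*y t^2*ee⁻¹ + (24 : ℂ)*a1*a2*t^2*ee⁻¹) * (mul_inv_cancel₀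 he0) +
          ((144 : ℂ)*a2*x t*y t^2*ee⁻¹ + (-72 : ℂ)*a2*x t*y t^2*ee*ee⁻¹^2 + (-72 : ℂ)*a2*x t*y t^2*z t*ee⁻¹^2 + (3/2 : ℂ)*a2*t⁻¹*ee⁻¹^2 + (-144 : ℂ)*a2*t*y t^2*ee⁻¹*w t + (72 : ℂ)*a2*t*y t^2*ee*ee⁻¹^2*w t + (72 : ℂ)*a2*t*y t^2*z t*ee⁻¹^2*w t + (-48 : ℂ)*a2*t*x t*ee⁻¹ + (24 : ℂ)*a2*t*x t*ee*ee⁻¹^2 + (24 : ℂ)*a2*t*x t*z t*ee⁻¹^2 + (48 : ℂ)*a2*t^2*ee⁻¹*w t + (-24 : ℂ)*a2*t^2*ee*ee⁻¹^2*w t + (-24 : ℂ)*a2*t^2*z t*ee⁻¹^2*w t + (-108 : ℂ)*a2^2*y t^4*ee⁻¹^2 + (180 : ℂ)*a2^2*t*y t^2*ee⁻¹^2 + (-48 : ℂ)*a2^2*t^2*ee⁻¹^2 + (72 : ℂ)*a1*a2*t*y t^2*ee⁻¹^2 + (-24 : ℂ)*a1*a2*t^2*ee⁻¹^2) * hee
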